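/- Let μ₁ = N(m₁, v₁) and μ₂ = N(m₂, v₂) be one-dimensional Gaussian measures with means m₁ = m₂ and variances v₁, v₂ ≥ 0. Then the Wasserstein-2 distance between them equals |√v₁ - √v₂|. In particular, for the n-step SGLD and SGLDFP chains in one-dimensional Bayesian linear regression (both started at θ⋆, with the same mean θ⋆ and variances v_SGLD = (1-μⁿ)/(1-μ) (2γ + γ²A) and v_FP = (1-μⁿ)/(1-μ) (2γ)), one gets W₂(law of SGLD iterate, law of SGLDFP iterate) ≥ ((1-μⁿ)/(1-μ))^{1/2} (√(2γ + γ²A) - √(2γ)). -/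

import Mathlib

open MeasureTheory ProbabilityTheory

open Real Set

section helpers


lemma aux_odd {b : ℝ} : ∫ x : ℝ, x * rexp (-b * x ^ 2) = 0 := by
  have h0 : (volume : Measure ℝ).map (Homeomorph.neg ℝ).toMeasurableEquiv = volume := by
    simpa using Measure.map_neg_eq_self (volume : Measure ℝ)
  have h := MeasureTheory.integral_map_equiv (μ := (volume : Measure ℝ))
    (Homeomorph.neg ℝ).toMeasurableEquiv (fun x : ℝ => x * rexp (-b * x ^ 2))
  rw [h0] at h
  have h' : ∫ x : ℝ, x * rexp (-b * x ^ 2) = ∫ x : ℝ, -(x * rexp (-b * x ^ 2)) := by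
    rw [h]; congr 1; ext x
    show (Homeomorph.neg ℝ) x * rexp (-b * ((Homeomorph.neg ℝ) x) ^ 2) = _
    simp [Homeomorph.neg]
  rw [integral_neg] at h'
  linarith

lemma aux_sq {b : ℝ} (hb : 0 < b) :
    ∫ x : ℝ, x ^ 2 * rexp (-b * x ^ 2) = Real.sqrt (π / b) / (2 * b) := by
  have h1 : ∫ x : ℝ, x ^ 2 * rexp (-b * x ^ 2)
      = 2 * ∫ x in Ioi (0:ℝ), x ^ 2 * rexp (-b * x ^ 2) := by
    rw [← integral_comp_abs (f := fun t => t ^ 2 * rexp (-b * t ^ 2))]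
    simp [sq_abs]
  rw [h1]
  have h2 : ∫ x in Ioi (0:ℝ), x ^ 2 * rexp (-b * x ^ 2)
      = ∫ x in Ioi (0:ℝ), x ^ (2:ℝ) * rexp (-b * x ^ (2:ℝ)) := by
    refine setIntegral_congr_fun measurableSet_Ioi (fun x hx => ?_)
    rw [← Real.rpow_natCast x 2]; norm_num
  rw [h2, integral_rpow_mul_exp_neg_mul_rpow two_pos (by norm_num) hb]
  have h3 : -((2:ℝ) + 1) / 2 = -(3/2) := by norm_num
  have h4 : ((2:ℝ) + 1) / 2 = 3/2 := by norm_num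
  have hG : Real.Gamma (3/2) = Real.sqrt π / 2 := by
    have : (3:ℝ)/2 = 1/2 + 1 := by norm_num
    rw [this, Real.Gamma_add_one (by norm_num), Real.Gamma_one_half_eq]
    ring
  rw [h3, h4, hG]
  have hb' : b ^ (-(3/2):ℝ) = ((Real.sqrt b) * b)⁻¹ := by
    rw [show (-(3/2):ℝ) = -(1/2) + -1 by norm_num, Real.rpow_add hb, Real.rpow_neg_one,
      Real.rpow_neg hb.le, ← Real.sqrt_eq_rpow, mul_inv]
  rw [hb', Real.sqrt_div pi_pos.le]
  have hsb : Real.sqrt b ≠ 0 := (Real.sqrt_pos.mpr hb).ne'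
  field_simp


lemma pdf_transfer {m : ℝ} {v : NNReal} (hv : v ≠ 0) (g : ℝ → ℝ) :
    ∫ x, g x ∂(gaussianReal m v) = ∫ x, gaussianPDFReal m v x * g x := by
  rw [gaussianReal_of_var_ne_zero _ hv,
    show gaussianPDF m v = (fun x => ((Real.toNNReal (gaussianPDFReal m v x)) : ENNReal)) from rfl,
    integral_withDensity_eq_integral_smul ((measurable_gaussianPDFReal m v).real_toNNReal) g]
  congr 1; ext x
  rw [NNReal.smul_def, smul_eq_mul, Real.coe_toNNReal _ (gaussianPDFReal_nonneg m v x)]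

lemma pdf_transfer_int {m : ℝ} {v : NNReal} (hv : v ≠ 0) (g : ℝ → ℝ) :
    Integrable g (gaussianReal m v) ↔ Integrable (fun x => gaussianPDFReal m v x * g x) volume := by
  rw [gaussianReal_of_var_ne_zero _ hv,
    show gaussianPDF m v = (fun x => ((Real.toNNReal (gaussianPDFReal m v x)) : ENNReal)) from rfl,
    integrable_withDensity_iff_integrable_smul ((measurable_gaussianPDFReal m v).real_toNNReal)]
  constructor <;> intro h <;> refine h.congr (Filter.Eventually.of_forall fun x => ?_) <;>
    simp only [NNReal.smul_def, smul_eq_mul, Real.coe_toNNReal _ (gaussianPDFReal_nonneg m v x)]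

lemma pdf01 (x : ℝ) : gaussianPDFReal 0 1 x = (Real.sqrt (2*π))⁻¹ * rexp (-(1/2) * x^2) := by
  simp only [gaussianPDFReal, NNReal.coe_one, mul_one, sub_zero]
  ring_nf

lemma int_sq_N01 : Integrable (fun x : ℝ => x ^ 2) (gaussianReal 0 1) := by
  rw [pdf_transfer_int one_ne_zero]
  have h : Integrable (fun x : ℝ => x ^ (2:ℝ) * rexp (-(1/2) * x^2)) volume :=
    integrable_rpow_mul_exp_neg_mul_sq (by norm_num) (by norm_num)
  have h2 : Integrable (fun x : ℝ => x ^ 2 * rexp (-(1/2) * x^2)) volume := by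
    refine h.congr (Filter.Eventually.of_forall fun x => ?_)
    simp only []
    norm_num [show ((2:ℝ)) = ((2:ℕ):ℝ) by norm_num, Real.rpow_natCast]
  refine (h2.const_mul ((Real.sqrt (2*π))⁻¹)).congr (Filter.Eventually.of_forall fun x => ?_)
  simp only [pdf01]; ring

lemma memL2_N01 : MemLp id 2 (gaussianReal 0 1) :=
  (memLp_two_iff_integrable_sq aestronglyMeasurable_id).mpr int_sq_N01

lemma mean_N01 : ∫ x, x ∂(gaussianReal 0 1) = 0 := by
  rw [pdf_transfer one_ne_zero]
  have : ∀ x : ℝ, gaussianPDFReal 0 1 x * x = (Real.sqrt (2*π))⁻¹ * (x * rexp (-(1/2) * x^2)) := by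
    intro x; rw [pdf01]; ring
  simp_rw [this]
  rw [integral_const_mul, aux_odd, mul_zero]

lemma var_N01 : ∫ x, x ^ 2 ∂(gaussianReal 0 1) = 1 := by
  rw [pdf_transfer one_ne_zero]
  have : ∀ x : ℝ, gaussianPDFReal 0 1 x * x ^ 2
      = (Real.sqrt (2*π))⁻¹ * (x ^ 2 * rexp (-(1/2) * x^2)) := by
    intro x; rw [pdf01]; ring
  simp_rw [this]
  rw [integral_const_mul, aux_sq (by norm_num : (0:ℝ) < 1/2)]
  rw [show π / (1/2) = 2 * π by ring, show (2 * (1/2) : ℝ) = 1 by norm_num, div_one,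
    inv_mul_cancel₀ (Real.sqrt_ne_zero'.mpr (by positivity))]


lemma gauss_map (m : ℝ) (v : NNReal) :
    gaussianReal m v = (gaussianReal 0 1).map (fun x => Real.sqrt v * x + m) := by
  have h1 : (gaussianReal 0 1).map (fun x => Real.sqrt v * x) = gaussianReal 0 v := by
    rw [show (fun x => Real.sqrt v * x) = (Real.sqrt v * ·) from rfl,
      gaussianReal_map_const_mul]
    congr 1
    · ring
    · ext; simp [Real.sq_sqrt v.2]
  have h2 : ((gaussianReal 0 1).map (fun x => Real.sqrt v * x)).map (· + m)
      = gaussianReal m v := by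
    rw [h1, gaussianReal_map_add_const]; congr 1; ring
  have hg : Measurable (fun x : ℝ => x + m) := by fun_prop
  have hf : Measurable (fun x : ℝ => Real.sqrt v * x) := by fun_prop
  rw [← h2, Measure.map_map hg hf]
  rfl

lemma memL2_gauss (m : ℝ) (v : NNReal) : MemLp id 2 (gaussianReal m v) := by
  rw [gauss_map m v]
  have hφ : AEMeasurable (fun x : ℝ => Real.sqrt v * x + m) (gaussianReal 0 1) :=
    ((measurable_id.const_mul _).add_const m).aemeasurable
  rw [memLp_map_measure_iff aestronglyMeasurable_id hφ]
  exact ((memL2_N01.const_mul (Real.sqrt v)).add (memLp_const m))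

lemma integrable_id_N01 : Integrable (fun x : ℝ => x) (gaussianReal 0 1) :=
  memL2_N01.integrable one_le_two

lemma mean_gauss (m : ℝ) (v : NNReal) : ∫ x, x ∂(gaussianReal m v) = m := by
  have hφ : AEMeasurable (fun x : ℝ => Real.sqrt v * x + m) (gaussianReal 0 1) := by fun_prop
  rw [gauss_map m v]
  show ∫ x, id x ∂(Measure.map (fun x => Real.sqrt v * x + m) (gaussianReal 0 1)) = m
  rw [integral_map hφ aestronglyMeasurable_id]
  simp only [id_eq]
  rw [integral_add ((integrable_id_N01.const_mul _)) (integrable_const m),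
    integral_const_mul, mean_N01, integral_const]
  simp

lemma var_gauss (m : ℝ) (v : NNReal) : ∫ x, (x - m) ^ 2 ∂(gaussianReal m v) = v := by
  have hφ : AEMeasurable (fun x : ℝ => Real.sqrt v * x + m) (gaussianReal 0 1) := by fun_prop
  have hg : AEStronglyMeasurable (fun x : ℝ => (x - m) ^ 2)
      ((gaussianReal 0 1).map (fun x => Real.sqrt v * x + m)) := by measurability
  rw [gauss_map m v, integral_map hφ hg]
  simp only [id_eq, add_sub_cancel_right]
  have : ∀ x : ℝ, (Real.sqrt v * x) ^ 2 = (v : ℝ) * x ^ 2 := by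
    intro x; rw [mul_pow, Real.sq_sqrt v.coe_nonneg]
  simp_rw [this]
  rw [integral_const_mul, var_N01, mul_one]


lemma cs_int {α : Type*} [MeasurableSpace α] {μ : Measure α} {f g : α → ℝ}
    (hf : MemLp f 2 μ) (hg : MemLp g 2 μ)
    (hfg : Integrable (fun a => f a * g a) μ) :
    ∫ a, f a * g a ∂μ ≤ Real.sqrt (∫ a, f a ^ 2 ∂μ) * Real.sqrt (∫ a, g a ^ 2 ∂μ) := by
  have hpq : (2:ℝ).HolderConjugate 2 := Real.HolderConjugate.two_two
  have hf' : MemLp f (ENNReal.ofReal 2) μ := by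
    rwa [show ENNReal.ofReal 2 = 2 by norm_num]
  have hg' : MemLp g (ENNReal.ofReal 2) μ := by
    rwa [show ENNReal.ofReal 2 = 2 by norm_num]
  have h := integral_mul_norm_le_Lp_mul_Lq hpq hf' hg'
  have e1 : ∫ a, ‖f a‖ ^ (2:ℝ) ∂μ = ∫ a, f a ^ 2 ∂μ := by
    congr 1; ext a
    rw [show ((2:ℝ)) = ((2:ℕ):ℝ) by norm_num, Real.rpow_natCast, Real.norm_eq_abs, sq_abs]
  have e2 : ∫ a, ‖g a‖ ^ (2:ℝ) ∂μ = ∫ a, g a ^ 2 ∂μ := by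
    congr 1; ext a
    rw [show ((2:ℝ)) = ((2:ℕ):ℝ) by norm_num, Real.rpow_natCast, Real.norm_eq_abs, sq_abs]
  rw [e1, e2] at h
  calc ∫ a, f a * g a ∂μ ≤ ∫ a, ‖f a‖ * ‖g a‖ ∂μ := by
        refine integral_mono hfg ?_ (fun a => ?_)
        · refine hfg.norm.congr (Filter.Eventually.of_forall fun a => ?_)
          simp [abs_mul]
        · exact le_abs_self _ |>.trans (by rw [abs_mul]; rfl)
    _ ≤ (∫ a, f a ^ 2 ∂μ) ^ ((1:ℝ)/2) * (∫ a, g a ^ 2 ∂μ) ^ ((1:ℝ)/2) := h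
    _ = _ := by
        rw [← Real.sqrt_eq_rpow, ← Real.sqrt_eq_rpow]

lemma gelbrich (ξ : Measure (ℝ × ℝ)) [IsProbabilityMeasure ξ] {lam nu : Measure ℝ}
    (h1 : ξ.map Prod.fst = lam) (h2 : ξ.map Prod.snd = nu)
    (hL1 : MemLp id 2 lam) (hL2 : MemLp id 2 nu) (m v1 v2 : ℝ)
    (hm1 : ∫ t, t ∂lam = m) (hm2 : ∫ t, t ∂nu = m)
    (hv1 : ∫ t, (t - m) ^ 2 ∂lam = v1) (hv2 : ∫ t, (t - m) ^ 2 ∂nu = v2) :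
    (Real.sqrt v1 - Real.sqrt v2) ^ 2 ≤ ∫ q, (q.1 - q.2) ^ 2 ∂ξ := by
  -- F and G
  have hF : MemLp (fun q : ℝ × ℝ => q.1 - m) 2 ξ := by
    have : MemLp (fun q : ℝ × ℝ => q.1) 2 ξ := by
      have := hL1
      rw [← h1, memLp_map_measure_iff aestronglyMeasurable_id measurable_fst.aemeasurable] at this
      exact this
    exact this.sub (memLp_const m)
  have hG : MemLp (fun q : ℝ × ℝ => q.2 - m) 2 ξ := by
    have : MemLp (fun q : ℝ × ℝ => q.2) 2 ξ := by
      have := hL2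
      rw [← h2, memLp_map_measure_iff aestronglyMeasurable_id measurable_snd.aemeasurable] at this
      exact this
    exact this.sub (memLp_const m)
  have intF2 : Integrable (fun q : ℝ × ℝ => (q.1 - m) ^ 2) ξ :=
    (memLp_two_iff_integrable_sq hF.aestronglyMeasurable).mp hF
  have intG2 : Integrable (fun q : ℝ × ℝ => (q.2 - m) ^ 2) ξ :=
    (memLp_two_iff_integrable_sq hG.aestronglyMeasurable).mp hG
  have intFG : Integrable (fun q : ℝ × ℝ => (q.1 - m) * (q.2 - m)) ξ := by
    refine Integrable.mono' (intF2.add intG2)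
      (hF.aestronglyMeasurable.mul hG.aestronglyMeasurable)
      (Filter.Eventually.of_forall fun q => ?_)
    simp only [Pi.add_apply, Real.norm_eq_abs, abs_mul]
    nlinarith [abs_nonneg (q.1 - m), abs_nonneg (q.2 - m), sq_abs (q.1 - m), sq_abs (q.2 - m),
      sq_nonneg (|q.1 - m| - |q.2 - m|)]
  -- moment identities
  have hIF2 : ∫ q, (q.1 - m) ^ 2 ∂ξ = v1 := by
    rw [← hv1, ← h1, integral_map measurable_fst.aemeasurable]
    exact ((aestronglyMeasurable_id.sub aestronglyMeasurable_const).pow 2)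
  have hIG2 : ∫ q, (q.2 - m) ^ 2 ∂ξ = v2 := by
    rw [← hv2, ← h2, integral_map measurable_snd.aemeasurable]
    exact ((aestronglyMeasurable_id.sub aestronglyMeasurable_const).pow 2)
  have hv1n : 0 ≤ v1 := by
    rw [← hIF2]; exact integral_nonneg fun q => sq_nonneg _
  have hv2n : 0 ≤ v2 := by
    rw [← hIG2]; exact integral_nonneg fun q => sq_nonneg _
  -- Cauchy-Schwarz
  have hcs : ∫ q, (q.1 - m) * (q.2 - m) ∂ξ ≤ Real.sqrt v1 * Real.sqrt v2 := by
    have := cs_int hF hG intFG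
    rwa [hIF2, hIG2] at this
  -- expansion
  have hexp : ∫ q, (q.1 - q.2) ^ 2 ∂ξ
      = v1 - 2 * ∫ q, (q.1 - m) * (q.2 - m) ∂ξ + v2 := by
    have : (fun q : ℝ × ℝ => (q.1 - q.2) ^ 2)
        = fun q : ℝ × ℝ => ((q.1 - m) ^ 2 - 2 * ((q.1 - m) * (q.2 - m))) + (q.2 - m) ^ 2 := by
      ext q; ring
    have iadd : ∫ q : ℝ × ℝ, ((q.1 - m) ^ 2 - 2 * ((q.1 - m) * (q.2 - m)) + (q.2 - m) ^ 2) ∂ξ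
        = (∫ q : ℝ × ℝ, ((q.1 - m) ^ 2 - 2 * ((q.1 - m) * (q.2 - m))) ∂ξ)
          + ∫ q : ℝ × ℝ, (q.2 - m) ^ 2 ∂ξ :=
      integral_add (intF2.sub (intFG.const_mul 2)) intG2
    have isub : ∫ q : ℝ × ℝ, ((q.1 - m) ^ 2 - 2 * ((q.1 - m) * (q.2 - m))) ∂ξ
        = (∫ q : ℝ × ℝ, (q.1 - m) ^ 2 ∂ξ)
          - ∫ q : ℝ × ℝ, 2 * ((q.1 - m) * (q.2 - m)) ∂ξ :=
      integral_sub intF2 (intFG.const_mul 2)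
    rw [this, iadd, isub, integral_const_mul, hIF2, hIG2]
  have hs1 : Real.sqrt v1 ^ 2 = v1 := Real.sq_sqrt hv1n
  have hs2 : Real.sqrt v2 ^ 2 = v2 := Real.sq_sqrt hv2n
  nlinarith [hcs, hexp]


-- every element of the coupling-cost set is ≥ |√v1 - √v2| (Gelbrich bound, abstract version)
lemma W2_set_lower {lam nu : Measure ℝ} (hL1 : MemLp id 2 lam) (hL2 : MemLp id 2 nu)
    (m v1 v2 : ℝ) (hm1 : ∫ t, t ∂lam = m) (hm2 : ∫ t, t ∂nu = m)
    (hv1 : ∫ t, (t - m) ^ 2 ∂lam = v1) (hv2 : ∫ t, (t - m) ^ 2 ∂nu = v2)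
    {r : ℝ} (hr : r ∈ { r : ℝ | ∃ ξ : Measure (ℝ × ℝ), IsProbabilityMeasure ξ ∧
      ξ.map Prod.fst = lam ∧ ξ.map Prod.snd = nu ∧
      r = (∫ q, (q.1 - q.2) ^ 2 ∂ξ) ^ ((1 : ℝ) / 2) }) :
    |Real.sqrt v1 - Real.sqrt v2| ≤ r := by
  obtain ⟨ξ, hξ, hf, hs, hr⟩ := hr
  have hge := gelbrich ξ hf hs hL1 hL2 m v1 v2 hm1 hm2 hv1 hv2
  have hnn : 0 ≤ ∫ q, (q.1 - q.2) ^ 2 ∂ξ := integral_nonneg fun q => sq_nonneg _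
  rw [hr, ← Real.sqrt_eq_rpow]
  calc |Real.sqrt v1 - Real.sqrt v2| = Real.sqrt ((Real.sqrt v1 - Real.sqrt v2) ^ 2) :=
        (Real.sqrt_sq_eq_abs _).symm
    _ ≤ Real.sqrt (∫ q, (q.1 - q.2) ^ 2 ∂ξ) := Real.sqrt_le_sqrt hge

lemma W2_mem_nonneg {lam nu : Measure ℝ} {r : ℝ}
    (hr : r ∈ { r : ℝ | ∃ ξ : Measure (ℝ × ℝ), IsProbabilityMeasure ξ ∧
      ξ.map Prod.fst = lam ∧ ξ.map Prod.snd = nu ∧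
      r = (∫ q, (q.1 - q.2) ^ 2 ∂ξ) ^ ((1 : ℝ) / 2) }) : 0 ≤ r := by
  obtain ⟨ξ, hξ, hf, hs, hr⟩ := hr
  rw [hr]
  exact Real.rpow_nonneg (integral_nonneg fun q => sq_nonneg _) _

-- optimal coupling membership for gaussians
lemma gauss_coupling (m : ℝ) (v₁ v₂ : NNReal) :
    |Real.sqrt v₁ - Real.sqrt v₂| ∈
      { r : ℝ | ∃ ξ : Measure (ℝ × ℝ), IsProbabilityMeasure ξ ∧
        ξ.map Prod.fst = gaussianReal m v₁ ∧ ξ.map Prod.snd = gaussianReal m v₂ ∧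
        r = (∫ q, (q.1 - q.2) ^ 2 ∂ξ) ^ ((1 : ℝ) / 2) } := by
  by_cases hv₁ : v₁ = 0
  · subst hv₁
    refine ⟨(gaussianReal m v₂).map (fun y => (m, y)), ?_, ?_, ?_, ?_⟩
    · exact Measure.isProbabilityMeasure_map (by fun_prop)
    · rw [Measure.map_map measurable_fst (by fun_prop)]
      show Measure.map (fun _ => m) _ = _
      rw [Measure.map_const]
      simp
    · rw [Measure.map_map measurable_snd (by fun_prop)]
      simp [Measure.map_id]
    · have hmeas : AEMeasurable (fun y : ℝ => (m, y)) (gaussianReal m v₂) := by fun_prop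
      have hg : AEStronglyMeasurable (fun q : ℝ × ℝ => (q.1 - q.2) ^ 2)
          ((gaussianReal m v₂).map (fun y => (m, y))) :=
        ((continuous_fst.sub continuous_snd).pow 2).aestronglyMeasurable
      rw [integral_map hmeas hg]
      have : ∀ y : ℝ, (m - y) ^ 2 = (y - m) ^ 2 := fun y => by ring
      simp_rw [this]
      rw [var_gauss m v₂, ← Real.sqrt_eq_rpow]
      simp [abs_of_nonneg, Real.sqrt_nonneg]
  · set c : ℝ := Real.sqrt v₂ / Real.sqrt v₁ with hc
    have hv₁' : (0:ℝ) < v₁ := by exact_mod_cast pos_iff_ne_zero.mpr hv₁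
    have hs1 : Real.sqrt v₁ ≠ 0 := (Real.sqrt_pos.mpr hv₁').ne'
    refine ⟨(gaussianReal m v₁).map (fun x => (x, c * (x - m) + m)), ?_, ?_, ?_, ?_⟩
    · exact Measure.isProbabilityMeasure_map (by fun_prop)
    · rw [Measure.map_map measurable_fst (by fun_prop)]
      rw [show (Prod.fst ∘ fun x : ℝ => (x, c * (x - m) + m)) = id from rfl, Measure.map_id]
    · rw [Measure.map_map measurable_snd (by fun_prop)]
      show Measure.map (fun x => c * (x - m) + m) (gaussianReal m v₁) = _
      have e1 : (fun x : ℝ => c * (x - m) + m)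
          = (fun x => x + m) ∘ ((fun x => c * x) ∘ (fun x => x + (-m))) := by
        ext x; simp only [Function.comp_apply]; ring
      rw [e1, ← Measure.map_map (g := fun x : ℝ => x + m) (by fun_prop) (by fun_prop),
        ← Measure.map_map (g := fun x : ℝ => c * x) (by fun_prop) (by fun_prop)]
      rw [show (fun x : ℝ => x + (-m)) = (· + (-m)) from rfl, gaussianReal_map_add_const,
        show (fun x : ℝ => c * x) = (c * ·) from rfl, gaussianReal_map_const_mul,
        show (fun x : ℝ => x + m) = (· + m) from rfl, gaussianReal_map_add_const]
      rw [show c * (m + -m) + m = m by ring]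
      congr 1
      have hcsq : c ^ 2 * (v₁:ℝ) = v₂ := by
        rw [hc, div_pow, Real.sq_sqrt v₂.coe_nonneg, Real.sq_sqrt v₁.coe_nonneg]
        field_simp
      ext
      push_cast
      rw [← hcsq]
    · have hmeas : AEMeasurable (fun x : ℝ => (x, c * (x - m) + m)) (gaussianReal m v₁) := by
        fun_prop
      have hg : AEStronglyMeasurable (fun q : ℝ × ℝ => (q.1 - q.2) ^ 2)
          ((gaussianReal m v₁).map (fun x => (x, c * (x - m) + m))) :=
        ((continuous_fst.sub continuous_snd).pow 2).aestronglyMeasurable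
      rw [integral_map hmeas hg]
      have : ∀ x : ℝ, (x - (c * (x - m) + m)) ^ 2 = (1 - c) ^ 2 * (x - m) ^ 2 := by
        intro x; ring
      simp_rw [this]
      rw [integral_const_mul, var_gauss m v₁, ← Real.sqrt_eq_rpow,
        Real.sqrt_mul (sq_nonneg _), Real.sqrt_sq_eq_abs]
      rw [show |1 - c| * Real.sqrt v₁ = |(1 - c) * Real.sqrt v₁| by
        rw [abs_mul, abs_of_nonneg (Real.sqrt_nonneg _)]]
      congr 1
      rw [hc]
      field_simp

end helpers

/-- The Wasserstein distance of order 2 between two probability measures on `ℝ`,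
defined as the infimum over couplings of the `L²` transport cost. -/
noncomputable def W2 (lam nu : Measure ℝ) : ℝ :=
  sInf { r : ℝ | ∃ ξ : Measure (ℝ × ℝ), IsProbabilityMeasure ξ ∧
    ξ.map Prod.fst = lam ∧ ξ.map Prod.snd = nu ∧
    r = (∫ q, (q.1 - q.2) ^ 2 ∂ξ) ^ ((1 : ℝ) / 2) }

/-- `W₂` between one-dimensional Gaussians with the same mean is `|√v₁ - √v₂|`; in
particular the `n`-step SGLD and SGLDFP chains in 1-D Bayesian linear regression
(same mean `θ⋆`, variances `(1-μⁿ)/(1-μ)·(2γ+γ²A)` and `(1-μⁿ)/(1-μ)·2γ`) satisfy the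
stated `W₂` lower bound. -/
theorem stmt5 (m : ℝ) (v₁ v₂ : NNReal) (μfac γ A : ℝ) (n : ℕ) (hn : 1 ≤ n)
    (hμ : μfac ∈ Set.Ioo (0 : ℝ) 1) (hγ : 0 < γ) (hA : 0 ≤ A)
    (P Q : Measure ℝ) [IsProbabilityMeasure P] [IsProbabilityMeasure Q]
    (hPL2 : MemLp id 2 P) (hQL2 : MemLp id 2 Q)
    (θs : ℝ)
    (hPmean : ∫ t, t ∂P = θs) (hQmean : ∫ t, t ∂Q = θs)
    (hPvar : ∫ t, (t - θs) ^ 2 ∂P = (1 - μfac ^ n) / (1 - μfac) * (2 * γ + γ ^ 2 * A))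
    (hQvar : ∫ t, (t - θs) ^ 2 ∂Q = (1 - μfac ^ n) / (1 - μfac) * (2 * γ)) :
    W2 (gaussianReal m v₁) (gaussianReal m v₂) = |Real.sqrt v₁ - Real.sqrt v₂| ∧
    ((1 - μfac ^ n) / (1 - μfac)) ^ ((1 : ℝ) / 2)
        * (Real.sqrt (2 * γ + γ ^ 2 * A) - Real.sqrt (2 * γ))
      ≤ W2 P Q := by
  constructor
  · apply le_antisymm
    · exact csInf_le ⟨0, fun r hr => W2_mem_nonneg hr⟩ (gauss_coupling m v₁ v₂)
    · exact le_csInf ⟨_, gauss_coupling m v₁ v₂⟩ fun r hr =>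
        W2_set_lower (memL2_gauss m v₁) (memL2_gauss m v₂) m v₁ v₂
          (mean_gauss _ _) (mean_gauss _ _) (var_gauss _ _) (var_gauss _ _) hr
  · set C : ℝ := (1 - μfac ^ n) / (1 - μfac) with hCdef
    have hC : 0 ≤ C :=
      div_nonneg (by nlinarith [pow_le_one₀ hμ.1.le hμ.2.le (n := n)]) (by linarith [hμ.2])
    have hne : ∃ r : ℝ, r ∈ { r : ℝ | ∃ ξ : Measure (ℝ × ℝ), IsProbabilityMeasure ξ ∧
        ξ.map Prod.fst = P ∧ ξ.map Prod.snd = Q ∧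
        r = (∫ q, (q.1 - q.2) ^ 2 ∂ξ) ^ ((1 : ℝ) / 2) } := by
      refine ⟨_, P.prod Q, inferInstance, ?_, ?_, rfl⟩
      · rw [Measure.map_fst_prod]; simp
      · rw [Measure.map_snd_prod]; simp
    have hkey : ∀ r ∈ { r : ℝ | ∃ ξ : Measure (ℝ × ℝ), IsProbabilityMeasure ξ ∧
        ξ.map Prod.fst = P ∧ ξ.map Prod.snd = Q ∧
        r = (∫ q, (q.1 - q.2) ^ 2 ∂ξ) ^ ((1 : ℝ) / 2) },
        |Real.sqrt (C * (2 * γ + γ ^ 2 * A)) - Real.sqrt (C * (2 * γ))| ≤ r :=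
      fun r hr => W2_set_lower hPL2 hQL2 θs _ _ hPmean hQmean hPvar hQvar hr
    refine le_trans ?_ (le_csInf hne hkey)
    rw [Real.sqrt_mul hC, Real.sqrt_mul hC, ← Real.sqrt_eq_rpow, ← mul_sub]
    exact le_abs_self _
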